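/- For all integers 2 ≤ k ≤ n, N₂(n, k) ≤ ⌈e·k²·log n⌉; that is, there exists a k-suitable family of subsets of {1,…,n} of cardinality at most ⌈e·k²·log n⌉. -/

import Mathlib

open Finset

variable {n k : ℕ}

/-- The set cut out by `f` hitting value `z`. -/
def Bset (z : Fin k) (f : Fin n → Fin k) : Finset (Fin n) :=
  Finset.univ.filter (fun x => f x = z)

/-- Per-coordinate allowed values for `f` making `(A,a)` succeed. -/
def Tfam (z : Fin k) (A : Finset (Fin n)) (a : Fin n) : Fin n → Finset (Fin k) :=
  fun x => if x = a then {z} else if x ∈ A then Finset.univ.filter (· ≠ z) else Finset.univ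

lemma mem_piFinset_T_iff (z : Fin k) (A : Finset (Fin n)) (a : Fin n) (ha : a ∈ A)
    (f : Fin n → Fin k) :
    f ∈ Fintype.piFinset (Tfam z A a) ↔ A ∩ Bset z f = {a} := by
  have key : (A ∩ Bset z f = {a}) ↔ ∀ x, (x ∈ A ∧ f x = z) ↔ x = a := by
    rw [Finset.ext_iff]; apply forall_congr'; intro x; simp [Bset]
  rw [Fintype.mem_piFinset, key]
  constructor
  · intro h x
    constructor
    · rintro ⟨hxA, hfx⟩
      by_contra hxa
      have hx := h x
      simp only [Tfam, if_neg hxa, if_pos hxA, mem_filter, mem_univ, true_and] at hx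
      exact hx hfx
    · intro hxa; subst hxa; exact ⟨ha, by have hx2 := h x; simpa [Tfam] using hx2⟩
  · intro h x
    by_cases hxa : x = a
    · subst hxa; have := (h x).mpr rfl; simp [Tfam, this.2]
    · simp only [Tfam, if_neg hxa]
      by_cases hxA : x ∈ A
      · simp only [if_pos hxA, mem_filter, mem_univ, true_and]
        intro hfx; exact hxa ((h x).mp ⟨hxA, hfx⟩)
      · simp [hxA]

lemma card_piFinset_T (z : Fin k) (A : Finset (Fin n)) (a : Fin n) (ha : a ∈ A)
    (hA : A.card = k) :
    (Fintype.piFinset (Tfam z A a)).card = (k - 1) ^ (k - 1) * k ^ (n - k) := by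
  rw [Fintype.card_piFinset]
  have hcard : ∀ x, (Tfam z A a x).card = if x = a then 1 else if x ∈ A then k - 1 else k := by
    intro x
    simp only [Tfam]
    split_ifs with h1 h2
    · simp
    · have : Finset.univ.filter (· ≠ z) = {z}ᶜ := by
        ext y; simp [Finset.mem_compl]
      rw [this, Finset.card_compl]
      simp
    · simp
  simp only [hcard]
  rw [← Finset.prod_mul_prod_compl A]
  have h1 : ∏ x ∈ A, (if x = a then 1 else if x ∈ A then k - 1 else k) = (k - 1) ^ (k - 1) := by
    rw [← Finset.mul_prod_erase A _ ha, if_pos rfl, one_mul]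
    have he : ∀ x ∈ A.erase a, (if x = a then 1 else if x ∈ A then k - 1 else k) = k - 1 := by
      intro x hx
      rw [if_neg (Finset.ne_of_mem_erase hx), if_pos (Finset.mem_of_mem_erase hx)]
    rw [Finset.prod_congr rfl he, Finset.prod_const, Finset.card_erase_of_mem ha, hA]
  have h2 : ∏ x ∈ Aᶜ, (if x = a then 1 else if x ∈ A then k - 1 else k) = k ^ (n - k) := by
    have he : ∀ x ∈ Aᶜ, (if x = a then 1 else if x ∈ A then k - 1 else k) = k := by
      intro x hx
      rw [Finset.mem_compl] at hx
      rw [if_neg (fun hxe => hx (by rw [hxe]; exact ha)), if_neg hx]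
    rw [Finset.prod_congr rfl he, Finset.prod_const, Finset.card_compl, hA]
    simp
  rw [h1, h2]

lemma key_real (n k m : ℕ) (hk : 2 ≤ k) (hkn : k ≤ n)
    (hm : Real.exp 1 * (k : ℝ) ^ 2 * Real.log n ≤ m) :
    ((k * Nat.choose n k : ℕ) : ℝ) * ((k : ℝ) ^ n - ((k : ℝ) - 1) ^ (k - 1) * (k : ℝ) ^ (n - k)) ^ m
      < ((k : ℝ) ^ n) ^ m := by
  have hn2 : 2 ≤ n := le_trans hk hkn
  have hn0 : (0 : ℝ) < (n : ℝ) := by exact_mod_cast Nat.lt_of_lt_of_le (by norm_num) hn2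
  have hn1 : (1 : ℝ) < (n : ℝ) := by exact_mod_cast Nat.lt_of_lt_of_le (by norm_num) hn2
  set K : ℝ := (k : ℝ) with hKdef
  have hK2 : (2 : ℝ) ≤ K := by rw [hKdef]; exact_mod_cast hk
  have hK0 : 0 < K := by linarith
  have hc0 : (0 : ℝ) < K - 1 := by linarith
  set p : ℝ := (K - 1) ^ (k - 1) / K ^ k with hpdef
  have hp0 : 0 < p := div_pos (pow_pos hc0 _) (pow_pos hK0 _)
  have hp1 : p ≤ 1 := by
    rw [hpdef, div_le_one (pow_pos hK0 _)]
    calc (K - 1) ^ (k - 1) ≤ K ^ (k - 1) := by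
          apply pow_le_pow_left₀ hc0.le (by linarith)
      _ ≤ K ^ k := pow_le_pow_right₀ (by linarith) (Nat.sub_le k 1)
  have hKk : K ^ k = K ^ (k - 1) * K := by
    conv_lhs => rw [show k = (k - 1) + 1 by omega]
    rw [pow_succ]
  -- fail = K^n * (1 - p)
  have hfail : K ^ n - (K - 1) ^ (k - 1) * K ^ (n - k) = K ^ n * (1 - p) := by
    have hsplit : K ^ n = K ^ k * K ^ (n - k) := by
      rw [← pow_add, Nat.add_sub_cancel' hkn]
    rw [mul_one_sub, hpdef, hsplit]
    field_simp
  -- p ≥ 1/(e*K)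
  have hplow : 1 / (Real.exp 1 * K) ≤ p := by
    have hck : ((k - 1 : ℕ) : ℝ) = K - 1 := by
      push_cast [Nat.cast_sub (by omega : 1 ≤ k)]; ring
    have h1 : K / (K - 1) ≤ Real.exp (1 / (K - 1)) := by
      have h := Real.add_one_le_exp (1 / (K - 1))
      calc K / (K - 1) = 1 / (K - 1) + 1 := by field_simp; ring
        _ ≤ _ := h
    have h2 : (K / (K - 1)) ^ (k - 1) ≤ Real.exp 1 := by
      calc (K / (K - 1)) ^ (k - 1) ≤ Real.exp (1 / (K - 1)) ^ (k - 1) := by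
            apply pow_le_pow_left₀ (by positivity) h1
        _ = Real.exp (((k - 1 : ℕ) : ℝ) * (1 / (K - 1))) := (Real.exp_nat_mul _ _).symm
        _ = Real.exp ((K - 1) * (1 / (K - 1))) := by rw [hck]
        _ = Real.exp 1 := by rw [mul_one_div, div_self (by linarith)]
    have h3 : (Real.exp 1)⁻¹ ≤ ((K - 1) / K) ^ (k - 1) := by
      have hx : ((K - 1) / K) ^ (k - 1) = ((K / (K - 1)) ^ (k - 1))⁻¹ := by
        rw [← inv_pow, inv_div]
      rw [hx]
      exact inv_anti₀ (by positivity) h2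
    have hkey : (Real.exp 1)⁻¹ * K ^ (k - 1) ≤ (K - 1) ^ (k - 1) := by
      rw [div_pow] at h3
      exact (le_div_iff₀ (pow_pos hK0 _)).mp h3
    rw [hpdef, div_le_div_iff₀ (by positivity) (pow_pos hK0 _)]
    calc 1 * K ^ k = ((Real.exp 1)⁻¹ * K ^ (k - 1)) * (Real.exp 1 * K) := by
          rw [hKk]; field_simp
      _ ≤ (K - 1) ^ (k - 1) * (Real.exp 1 * K) :=
          mul_le_mul_of_nonneg_right hkey (by positivity)
  -- m ≠ 0
  have hlogn : 0 < Real.log n := Real.log_pos hn1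
  have hm0 : 0 < (m : ℝ) := lt_of_lt_of_le (by positivity) hm
  have hmne : m ≠ 0 := by
    intro h; rw [h] at hm0; norm_num at hm0
  -- (1-p)^m < exp(-p)^m = exp(-(p m)) ≤ n⁻¹ ^ k
  have hstep1 : (1 - p) ^ m < Real.exp (-p) ^ m := by
    apply pow_lt_pow_left₀ _ (by linarith) hmne
    have := Real.add_one_lt_exp (show -p ≠ 0 by linarith)
    linarith
  have hstep2 : Real.exp (-p) ^ m = Real.exp (-(p * m)) := by
    rw [← Real.exp_nat_mul]; ring_nf
  have hpm : K * Real.log n ≤ p * m := by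
    calc K * Real.log n = (1 / (Real.exp 1 * K)) * (Real.exp 1 * K ^ 2 * Real.log n) := by
          field_simp
      _ ≤ (1 / (Real.exp 1 * K)) * m := by
          apply mul_le_mul_of_nonneg_left hm (by positivity)
      _ ≤ p * m := mul_le_mul_of_nonneg_right hplow hm0.le
  have hstep3 : Real.exp (-(p * m)) ≤ ((n : ℝ)⁻¹) ^ k := by
    have he : ((n : ℝ)⁻¹) ^ k = Real.exp (-(K * Real.log n)) := by
      rw [show -(K * Real.log n) = ((k : ℕ) : ℝ) * (-Real.log n) by rw [hKdef]; ring,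
        Real.exp_nat_mul, Real.exp_neg, Real.exp_log hn0]
    rw [he]
    exact Real.exp_le_exp.mpr (by linarith)
  have hchoose : ((k * Nat.choose n k : ℕ) : ℝ) ≤ (n : ℝ) ^ k := by
    have h : k * Nat.choose n k ≤ n ^ k := by
      calc k * Nat.choose n k ≤ (Nat.factorial k) * Nat.choose n k :=
            Nat.mul_le_mul_right _ (Nat.self_le_factorial k)
        _ = n.descFactorial k := (Nat.descFactorial_eq_factorial_mul_choose n k).symm
        _ ≤ n ^ k := Nat.descFactorial_le_pow n k
    exact_mod_cast h
  rw [hfail, mul_pow]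
  have h1p : (0 : ℝ) ≤ 1 - p := by linarith
  have hfinal : ((k * Nat.choose n k : ℕ) : ℝ) * (1 - p) ^ m < 1 := by
    calc ((k * Nat.choose n k : ℕ) : ℝ) * (1 - p) ^ m ≤ (n : ℝ) ^ k * (1 - p) ^ m :=
          mul_le_mul_of_nonneg_right hchoose (pow_nonneg h1p m)
      _ < (n : ℝ) ^ k * ((n : ℝ)⁻¹) ^ k := by
          apply mul_lt_mul_of_pos_left _ (by positivity)
          calc (1 - p) ^ m < Real.exp (-p) ^ m := hstep1
            _ = Real.exp (-(p * m)) := hstep2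
            _ ≤ _ := hstep3
      _ = 1 := by rw [← mul_pow, mul_inv_cancel₀ (by positivity)]; simp
  calc ((k * Nat.choose n k : ℕ) : ℝ) * ((K ^ n) ^ m * (1 - p) ^ m)
      = (K ^ n) ^ m * (((k * Nat.choose n k : ℕ) : ℝ) * (1 - p) ^ m) := by ring
    _ < (K ^ n) ^ m * 1 := by
        apply mul_lt_mul_of_pos_left hfinal (by positivity)
    _ = (K ^ n) ^ m := mul_one _

/-- A family `S` of subsets of `{1,…,n}` (modelled as `Fin n`) is a `k`-suitable family
if for every pointed `k`-subset `(A, a)` there is `B ∈ S` with `A ∩ B = {a}`. -/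
def IsSuitableFamily (n k : ℕ) (S : Finset (Finset (Fin n))) : Prop :=
  ∀ A : Finset (Fin n), A.card = k → ∀ a ∈ A, ∃ B ∈ S, A ∩ B = {a}

/-- `N₂(n, k)`: the minimum cardinality of a `k`-suitable family of subsets of `{1,…,n}`. -/
noncomputable def suitableNumber2 (n k : ℕ) : ℕ :=
  sInf {m : ℕ | ∃ S : Finset (Finset (Fin n)), IsSuitableFamily n k S ∧ S.card = m}

/-- For `2 ≤ k ≤ n`, one has `N₂(n, k) ≤ ⌈e k² log n⌉`: there is a `k`-suitable family
of subsets of `{1,…,n}` of cardinality at most `⌈e k² log n⌉`. -/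
theorem suitableNumber2_le (n k : ℕ) (hk : 2 ≤ k) (hkn : k ≤ n) :
    suitableNumber2 n k ≤ ⌈Real.exp 1 * (k : ℝ) ^ 2 * Real.log n⌉₊ ∧
      ∃ S : Finset (Finset (Fin n)), IsSuitableFamily n k S ∧
        S.card ≤ ⌈Real.exp 1 * (k : ℝ) ^ 2 * Real.log n⌉₊ := by
  classical
  set m := ⌈Real.exp 1 * (k : ℝ) ^ 2 * Real.log n⌉₊ with hmdef
  have hm : Real.exp 1 * (k : ℝ) ^ 2 * Real.log n ≤ m := Nat.le_ceil _
  have hz : 0 < k := by omega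
  let z : Fin k := ⟨0, hz⟩
  let P : Finset ((_ : Finset (Fin n)) × Fin n) :=
    (Finset.univ.powersetCard k).sigma (fun A => A)
  let F : Finset (Fin n) → Fin n → Finset (Fin n → Fin k) :=
    fun A a => (Fintype.piFinset (Tfam z A a))ᶜ
  let Bad : Finset (Fin m → Fin n → Fin k) :=
    P.biUnion (fun q => Fintype.piFinset (fun _ : Fin m => F q.1 q.2))
  have hs_le : (k - 1) ^ (k - 1) * k ^ (n - k) ≤ k ^ n := by
    calc (k - 1) ^ (k - 1) * k ^ (n - k)
        ≤ k ^ (k - 1) * k ^ (n - k) :=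
          Nat.mul_le_mul_right _ (Nat.pow_le_pow_left (Nat.sub_le k 1) _)
      _ = k ^ (k - 1 + (n - k)) := (pow_add _ _ _).symm
      _ ≤ k ^ n := Nat.pow_le_pow_right hz (by omega)
  have hcardF : ∀ A a, a ∈ A → A.card = k →
      (F A a).card = k ^ n - (k - 1) ^ (k - 1) * k ^ (n - k) := by
    intro A a ha hA
    show (Fintype.piFinset (Tfam z A a))ᶜ.card = _
    rw [Finset.card_compl, card_piFinset_T z A a ha hA]
    congr 1
    simp [Fintype.card_fun]
  have hcardBad : Bad.card ≤ (k * Nat.choose n k) * (k ^ n - (k - 1) ^ (k - 1) * k ^ (n - k)) ^ m := by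
    calc Bad.card ≤ ∑ q ∈ P, (Fintype.piFinset (fun _ : Fin m => F q.1 q.2)).card :=
          Finset.card_biUnion_le
      _ ≤ ∑ _q ∈ P, (k ^ n - (k - 1) ^ (k - 1) * k ^ (n - k)) ^ m := by
          apply Finset.sum_le_sum
          intro q hq
          rw [Finset.mem_sigma] at hq
          rw [Fintype.card_piFinset, hcardF q.1 q.2 hq.2 (Finset.mem_powersetCard_univ.mp hq.1)]
          simp
      _ = P.card * (k ^ n - (k - 1) ^ (k - 1) * k ^ (n - k)) ^ m := by
          rw [Finset.sum_const, smul_eq_mul]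
      _ = (k * Nat.choose n k) * (k ^ n - (k - 1) ^ (k - 1) * k ^ (n - k)) ^ m := by
          congr 1
          show ((Finset.univ.powersetCard k).sigma (fun A => A)).card = _
          rw [Finset.card_sigma]
          rw [Finset.sum_congr rfl (fun A hA => Finset.mem_powersetCard_univ.mp hA)]
          rw [Finset.sum_const, smul_eq_mul, Finset.card_powersetCard, Finset.card_univ,
            Fintype.card_fin]
          ring
  have hlt : Bad.card < Fintype.card (Fin m → Fin n → Fin k) := by
    have hkey := key_real n k m hk hkn hm
    have hcast : ((k ^ n - (k - 1) ^ (k - 1) * k ^ (n - k) : ℕ) : ℝ)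
        = (k : ℝ) ^ n - ((k : ℝ) - 1) ^ (k - 1) * (k : ℝ) ^ (n - k) := by
      push_cast [Nat.cast_sub hs_le, Nat.cast_sub (show 1 ≤ k by omega)]
      ring
    have hnat : (k * Nat.choose n k) * (k ^ n - (k - 1) ^ (k - 1) * k ^ (n - k)) ^ m
        < (k ^ n) ^ m := by
      rw [← hcast] at hkey
      exact_mod_cast hkey
    calc Bad.card ≤ _ := hcardBad
      _ < (k ^ n) ^ m := hnat
      _ = Fintype.card (Fin m → Fin n → Fin k) := by simp [Fintype.card_fun]
  obtain ⟨ω, hω⟩ : ∃ ω, ω ∉ Bad := by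
    by_contra h
    push_neg at h
    rw [Finset.eq_univ_iff_forall.mpr h, Finset.card_univ] at hlt
    exact lt_irrefl _ hlt
  let S : Finset (Finset (Fin n)) := Finset.univ.image (fun i : Fin m => Bset z (ω i))
  have hSsuit : IsSuitableFamily n k S := by
    intro A hA a ha
    have hq : (⟨A, a⟩ : (_ : Finset (Fin n)) × Fin n) ∈ P := by
      rw [Finset.mem_sigma]
      exact ⟨Finset.mem_powersetCard_univ.mpr hA, ha⟩
    have hnb : ω ∉ Fintype.piFinset (fun _ : Fin m => F A a) := fun hc =>
      hω (Finset.mem_biUnion.mpr ⟨⟨A, a⟩, hq, hc⟩)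
    rw [Fintype.mem_piFinset] at hnb
    push_neg at hnb
    obtain ⟨i, hi⟩ := hnb
    have hi' : ω i ∈ Fintype.piFinset (Tfam z A a) := by
      have : ω i ∉ (Fintype.piFinset (Tfam z A a))ᶜ := hi
      simpa using this
    refine ⟨Bset z (ω i), Finset.mem_image_of_mem _ (Finset.mem_univ i), ?_⟩
    exact (mem_piFinset_T_iff z A a ha (ω i)).mp hi'
  have hScard : S.card ≤ m := le_trans Finset.card_image_le (by simp)
  constructor
  · exact le_trans (Nat.sInf_le ⟨S, hSsuit, rfl⟩) hScard
  · exact ⟨S, hSsuit, hScard⟩
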